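/- Let X be a set of arcs of the completed ∞-gon ōZ_m. Then X satisfies the completed PC conditions if and only if the set π⁻¹X ∩ A of arcs of Z_{2m} satisfies the PC conditions. -/

import Mathlib

namespace PY

/-! ### The ∞-gon `Z_{2m}`

Labels are elements of `Fin (2 * m)`, ordered `1' < 1 < 2' < 2 < ⋯ < m' < m`:
the label `2 * i` is the primed (accumulation-point) label `(i+1)'` and the label
`2 * i + 1` is the unprimed label `i + 1`.  A point of `Z_{2m}` is a pair of a label and
an integer. -/

/-- Points of the ∞-gon `Z_{2m}`: a label and an integer. -/
abbrev Pt (m : ℕ) := Fin (2 * m) × ℤ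

/-- Cyclic successor of a label. -/
def cycSucc {n : ℕ} (r : Fin n) : Fin n := ⟨(r.1 + 1) % n, Nat.mod_lt _ r.pos⟩

/-- Cyclic predecessor of a label. -/
def cycPred {n : ℕ} (r : Fin n) : Fin n := ⟨(r.1 + (n - 1)) % n, Nat.mod_lt _ r.pos⟩

/-- Strict lexicographic order on the points of `Z_{2m}`. -/
def ptLt {m : ℕ} (a b : Pt m) : Prop := a.1 < b.1 ∨ (a.1 = b.1 ∧ a.2 < b.2)

/-- `sort2 a b` is the pair `(a, b)` arranged in (weakly) increasing lexicographic
order; it realizes the notation `|a, b|` for the arc connecting two points. -/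
def sort2 {m : ℕ} (a b : Pt m) : Pt m × Pt m :=
  if a.1 < b.1 ∨ (a.1 = b.1 ∧ a.2 ≤ b.2) then (a, b) else (b, a)

/-- An ordered pair of points of `Z_{2m}` is an arc when its endpoints are in increasing
lexicographic order and, if they lie in the same copy of `ℤ`, differ by at least `2`. -/
def IsArc {m : ℕ} (x : Pt m × Pt m) : Prop :=
  ptLt x.1 x.2 ∧ (x.1.1 = x.2.1 → x.1.2 + 2 ≤ x.2.2)

/-- The precovering conditions (PC conditions) for a set of arcs of `Z_{2m}`. -/
structure PCcond {m : ℕ} (U : Set (Pt m × Pt m)) : Prop where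
  pc1 : ∀ p q : Fin (2 * m), p ≠ q → ∀ x1 x2 : ℕ → ℤ, StrictMono x1 → StrictMono x2 →
    (∀ n, ((p, x1 n), (q, x2 n)) ∈ U) →
    ∃ y1 y2 : ℕ → ℤ, StrictAnti y1 ∧ StrictAnti y2 ∧
      ∀ n, sort2 (cycSucc p, y1 n) (cycSucc q, y2 n) ∈ U
  pc2 : ∀ p q : Fin (2 * m), p ≠ cycSucc q → ∀ x1 x2 : ℕ → ℤ,
    StrictAnti x1 → StrictMono x2 →
    (∀ n, ((p, x1 n), (q, x2 n)) ∈ U) →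
    ∃ y1 y2 : ℕ → ℤ, StrictAnti y1 ∧ StrictAnti y2 ∧
      ∀ n, sort2 (p, y1 n) (cycSucc q, y2 n) ∈ U
  pc2' : ∀ p q : Fin (2 * m), q ≠ cycSucc p → p ≠ q → ∀ x1 x2 : ℕ → ℤ,
    StrictMono x1 → StrictAnti x2 →
    (∀ n, ((p, x1 n), (q, x2 n)) ∈ U) →
    ∃ y1 y2 : ℕ → ℤ, StrictAnti y1 ∧ StrictAnti y2 ∧
      ∀ n, sort2 (cycSucc p, y1 n) (q, y2 n) ∈ U
  pc3 : ∀ p q : Fin (2 * m), ∀ (x1 : ℤ) (x2 : ℕ → ℤ), StrictMono x2 →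
    (∀ n, ((p, x1), (q, x2 n)) ∈ U) →
    ∃ y2 : ℕ → ℤ, StrictAnti y2 ∧ ∀ n, sort2 (p, x1) (cycSucc q, y2 n) ∈ U
  pc3' : ∀ p q : Fin (2 * m), p ≠ q → ∀ (x1 : ℕ → ℤ) (x2 : ℤ), StrictMono x1 →
    (∀ n, ((p, x1 n), (q, x2)) ∈ U) →
    ∃ y1 : ℕ → ℤ, StrictAnti y1 ∧ ∀ n, sort2 (cycSucc p, y1 n) (q, x2) ∈ U

/-- A point is admissible for the subcategory `A`: its label is unprimed, or it is a
point `(q, n)` of a primed copy with `n ≤ z0`. -/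
def memA {m : ℕ} (z0 : ℤ) (a : Pt m) : Prop :=
  a.1.1 % 2 = 1 ∨ (a.1.1 % 2 = 0 ∧ a.2 ≤ z0)

/-- The set of arcs `A` determined by the choice of `z0`. -/
def setA (m : ℕ) (z0 : ℤ) : Set (Pt m × Pt m) :=
  {x | memA z0 x.1 ∧ memA z0 x.2}

/-! ### Decorations

The linearly ordered set `{p} ∪ Z^(p) ∪ {p⁺}` is modelled as `WithBot (WithTop ℤ)`:
`⊥` is the accumulation point `p`, an integer `n` is the point `n` of `Z^(p)`, and the
top element is the accumulation point `p⁺`. -/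

/-- The linearly ordered set `{p} ∪ Z^(p) ∪ {p⁺}`. -/
abbrev Dm := WithBot (WithTop ℤ)

/-- An integer, viewed in `{p} ∪ Z^(p) ∪ {p⁺}`. -/
def toDm (n : ℤ) : Dm := ((n : WithTop ℤ) : Dm)

/-- The element `p⁺` of `{p} ∪ Z^(p) ∪ {p⁺}`. -/
def topDm : Dm := ((⊤ : WithTop ℤ) : Dm)

/-- The unprimed label `p ∈ [m]` with index `i`. -/
def unpr {m : ℕ} (i : Fin m) : Fin (2 * m) := ⟨2 * i.1 + 1, by have := i.2; omega⟩

/-- The primed label `p' ∈ [m']` with index `i`. -/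
def prim {m : ℕ} (i : Fin m) : Fin (2 * m) := ⟨2 * i.1, by have := i.2; omega⟩

/-- Four points of `Fin n` (viewed on a circle with its natural cyclic order) are in
(strict, anticlockwise) cyclic order. -/
def Cyc4 {n : ℕ} (a b c d : Fin n) : Prop :=
  (a < b ∧ b < c ∧ c < d) ∨ (b < c ∧ c < d ∧ d < a) ∨
  (c < d ∧ d < a ∧ a < b) ∨ (d < a ∧ a < b ∧ b < c)

/-- A partition (setoid) of `Fin n` is non-crossing if there are no elements
`i1, j1, i2, j2` in cyclic order with `i1, i2` in one block and `j1, j2` in a different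
block. -/
def IsNoncrossing {n : ℕ} (P : Setoid (Fin n)) : Prop :=
  ∀ i1 j1 i2 j2 : Fin n, Cyc4 i1 j1 i2 j2 → P.r i1 i2 → P.r j1 j2 → P.r i1 j1

/-! ### Alternating non-crossing partitions and the arc sets `U_{(P,X)}` -/

/-- A point of `Z_{2m}` belongs to the interval `[x_{p⁻}, p⁺)` attached to the primed
label `p' ∈ [m']` of index `j`: it lies in the primed copy `Z^(p)`, or in the unprimed
copy `Z^(p⁻)` above the decoration `x_{p⁻}`. -/
def altRegion {m : ℕ} (x : Fin m → Dm) (j : Fin m) (a : Pt m) : Prop :=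
  a.1 = prim j ∨ (a.1 = unpr (cycPred j) ∧ x (cycPred j) ≤ toDm a.2)

/-- The set of arcs `U_{(P,X)}` associated with an alternating non-crossing partition
`(P, X)`: arcs both of whose endpoints lie in `⋃_{p ∈ B} [x_{p⁻}, p⁺)` for a single
block `B` of `P`. -/
def altU {m : ℕ} (P : Setoid (Fin m)) (x : Fin m → Dm) : Set (Pt m × Pt m) :=
  {a | IsArc a ∧ ∃ b : Fin m,
    (∃ j, P.r b j ∧ altRegion x j a.1) ∧ (∃ j, P.r b j ∧ altRegion x j a.2)}

end PY

namespace PY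

/-! ### The completed ∞-gon `ōZ_m`

A point is a pair of an index `p ∈ Fin m` and an element of `ℤ ∪ {⊥}`: the point
`(p, ⊥)` is the collapsed accumulation point `p' ∈ [m']` and `(p, n)` with `n : ℤ` is
the point `n` of the surviving copy `C^(p)`. -/

/-- Points of the completed ∞-gon `ōZ_m`. -/
abbrev CPt (m : ℕ) := Fin m × WithBot ℤ

/-- Strict lexicographic order on the points of `ōZ_m`. -/
def cptLt {m : ℕ} (a b : CPt m) : Prop := a.1 < b.1 ∨ (a.1 = b.1 ∧ a.2 < b.2)

/-- `csort2 a b` is the pair `(a, b)` arranged in (weakly) increasing lexicographic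
order; it realizes the notation `|a, b|` for the arc connecting two points. -/
noncomputable def csort2 {m : ℕ} (a b : CPt m) : CPt m × CPt m :=
  if a.1 < b.1 ∨ (a.1 = b.1 ∧ a.2 ≤ b.2) then (a, b) else (b, a)

/-- An ordered pair of points of `ōZ_m` is an arc when its endpoints are in increasing
lexicographic order and, if both are integer points of the same copy of `ℤ`, they differ
by at least `2`. -/
def IsCArc {m : ℕ} (x : CPt m × CPt m) : Prop :=
  cptLt x.1 x.2 ∧ ∀ n1 n2 : ℤ, x.1.2 = (n1 : WithBot ℤ) → x.2.2 = (n2 : WithBot ℤ) →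
    x.1.1 = x.2.1 → n1 + 2 ≤ n2

/-- The index in `Fin m` associated with a label of `Z_{2m}`. -/
def projIdx {m : ℕ} (r : Fin (2 * m)) : Fin m := ⟨r.1 / 2, by have := r.2; omega⟩

/-- The quotient map `π` on points: a point of an unprimed copy survives, a point of a
primed copy is collapsed to the corresponding accumulation point. -/
def projPt {m : ℕ} (a : Pt m) : CPt m :=
  (projIdx a.1, if a.1.1 % 2 = 1 then (a.2 : WithBot ℤ) else ⊥)

/-- The preimage `π⁻¹X` of a set `X` of arcs of `ōZ_m`: all arcs of `Z_{2m}` having both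
endpoints in a single primed copy, together with the arcs whose image under `π` lies
in `X`. -/
def preim {m : ℕ} (X : Set (CPt m × CPt m)) : Set (Pt m × Pt m) :=
  {a | IsArc a ∧ ((a.1.1 = a.2.1 ∧ a.1.1.1 % 2 = 0) ∨ (projPt a.1, projPt a.2) ∈ X)}

/-- The completed precovering conditions (the `ōPC` conditions) for a set of arcs of the
completed ∞-gon `ōZ_m`. -/
structure CPCcond {m : ℕ} (X : Set (CPt m × CPt m)) : Prop where
  pc1 : ∀ p q : Fin m, p ≠ q → ∀ x1 x2 : ℕ → ℤ, StrictMono x1 → StrictMono x2 →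
    (∀ n, (((p, (x1 n : WithBot ℤ)) : CPt m), ((q, (x2 n : WithBot ℤ)) : CPt m)) ∈ X) →
    csort2 (cycSucc p, ⊥) (cycSucc q, ⊥) ∈ X
  pc2 : ∀ p q : Fin m, ∀ x1 x2 : ℕ → ℤ, StrictAnti x1 → StrictMono x2 →
    (∀ n, (((p, (x1 n : WithBot ℤ)) : CPt m), ((q, (x2 n : WithBot ℤ)) : CPt m)) ∈ X) →
    ∃ y1 : ℕ → ℤ, StrictAnti y1 ∧
      ∀ n, csort2 (p, (y1 n : WithBot ℤ)) (cycSucc q, ⊥) ∈ X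
  pc2' : ∀ p q : Fin m, p ≠ q → ∀ x1 x2 : ℕ → ℤ, StrictMono x1 → StrictAnti x2 →
    (∀ n, (((p, (x1 n : WithBot ℤ)) : CPt m), ((q, (x2 n : WithBot ℤ)) : CPt m)) ∈ X) →
    ∃ y2 : ℕ → ℤ, StrictAnti y2 ∧
      ∀ n, csort2 (cycSucc p, ⊥) (q, (y2 n : WithBot ℤ)) ∈ X
  pc3 : ∀ (x1 : CPt m) (q : Fin m), x1 ≠ (cycSucc q, (⊥ : WithBot ℤ)) →
    ∀ x2 : ℕ → ℤ, StrictMono x2 →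
    (∀ n, (x1, ((q, (x2 n : WithBot ℤ)) : CPt m)) ∈ X) →
    csort2 x1 (cycSucc q, ⊥) ∈ X
  pc3' : ∀ (p : Fin m) (x2 : CPt m), ¬ (x2.1 = p ∧ x2.2 ≠ ⊥) →
    x2 ≠ (cycSucc p, (⊥ : WithBot ℤ)) →
    ∀ x1 : ℕ → ℤ, StrictMono x1 →
    (∀ n, (((p, (x1 n : WithBot ℤ)) : CPt m), x2) ∈ X) →
    csort2 (cycSucc p, ⊥) x2 ∈ X

end PY

namespace PY

variable {m : ℕ}

lemma strictMono_le_add {x : ℕ → ℤ} (hx : StrictMono x) : ∀ n : ℕ, x 0 + n ≤ x n := by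
  intro n
  induction n with
  | zero => simp
  | succ k ih =>
      have h : x k < x (k+1) := hx (Nat.lt_succ_self k)
      push_cast
      push_cast at ih
      omega

lemma exists_gt_of_strictMono {x : ℕ → ℤ} (hx : StrictMono x) (c : ℤ) : ∃ n, c < x n := by
  refine ⟨(c + 1 - x 0).toNat, ?_⟩
  have h1 := strictMono_le_add hx (c + 1 - x 0).toNat
  have h2 : (c + 1 - x 0) ≤ ((c + 1 - x 0).toNat : ℤ) := Int.self_le_toNat _
  omega

lemma strictAnti_sub (c : ℤ) : StrictAnti (fun n : ℕ => c - (n : ℤ)) := by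
  intro a b h
  have : (a : ℤ) < b := by exact_mod_cast h
  simp only
  omega

lemma zle (c : ℤ) (n : ℕ) : c - (n : ℤ) ≤ c := by
  have : (0:ℤ) ≤ n := Int.natCast_nonneg n
  omega

lemma cycSucc_val' (r : Fin (2*m)) :
    (cycSucc r).1 = if r.1 + 1 = 2*m then 0 else r.1 + 1 := by
  have h2 := r.2
  show (r.1 + 1) % (2*m) = _
  split
  · next he => rw [he, Nat.mod_self]
  · next he => exact Nat.mod_eq_of_lt (by omega)

lemma cycSucc_even (r : Fin (2*m)) (h : r.1 % 2 = 1) : (cycSucc r).1 % 2 = 0 := by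
  have h2 := r.2
  rw [cycSucc_val']
  split <;> omega

lemma projIdx_cycSucc (r : Fin (2*m)) (h : r.1 % 2 = 1) :
    projIdx (cycSucc r) = cycSucc (projIdx r) := by
  have h2 := r.2
  apply Fin.ext
  show (cycSucc r).1 / 2 = ((r.1/2) + 1) % m
  rw [cycSucc_val']
  split
  · next he =>
      have hm' : r.1/2 + 1 = m := by omega
      rw [hm', Nat.mod_self]
  · next he =>
      have hm' : r.1/2 + 1 < m := by omega
      rw [Nat.mod_eq_of_lt hm']
      omega

lemma projIdx_inj {r s : Fin (2*m)} (hpar : r.1 % 2 = s.1 % 2)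
    (h : projIdx r = projIdx s) : r = s := by
  have h' : r.1/2 = s.1/2 := congrArg Fin.val h
  apply Fin.ext
  omega

lemma cycSucc_inj {n : ℕ} {r s : Fin n} (h : cycSucc r = cycSucc s) : r = s := by
  have hv : (r.1 + 1) % n = (s.1 + 1) % n := congrArg Fin.val h
  have hr := r.2
  have hs := s.2
  apply Fin.ext
  rcases Nat.lt_or_ge (r.1+1) n with h1|h1 <;> rcases Nat.lt_or_ge (s.1+1) n with h2|h2
  · rw [Nat.mod_eq_of_lt h1, Nat.mod_eq_of_lt h2] at hv; omega
  · have he : s.1 + 1 = n := by omega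
    rw [Nat.mod_eq_of_lt h1, he, Nat.mod_self] at hv; omega
  · have he : r.1 + 1 = n := by omega
    rw [he, Nat.mod_self, Nat.mod_eq_of_lt h2] at hv; omega
  · omega

lemma projPt_odd (r : Fin (2*m)) (h : r.1 % 2 = 1) (n : ℤ) :
    projPt ((r, n) : Pt m) = (projIdx r, (n : WithBot ℤ)) := by
  simp [projPt, h]

lemma projPt_even (r : Fin (2*m)) (h : r.1 % 2 = 0) (n : ℤ) :
    projPt ((r, n) : Pt m) = (projIdx r, ⊥) := by
  simp only [projPt]
  rw [if_neg (by omega)]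

lemma unpr_odd (i : Fin m) : (unpr i).1 % 2 = 1 := by
  show (2 * i.1 + 1) % 2 = 1
  omega

lemma prim_even (i : Fin m) : (prim i).1 % 2 = 0 := by
  show (2 * i.1) % 2 = 0
  omega

lemma projIdx_unpr (i : Fin m) : projIdx (unpr i) = i := by
  apply Fin.ext
  show (2 * i.1 + 1) / 2 = i.1
  omega

lemma projIdx_prim (i : Fin m) : projIdx (prim i) = i := by
  apply Fin.ext
  show (2 * i.1) / 2 = i.1
  omega

lemma projPt_unpr (i : Fin m) (n : ℤ) :
    projPt ((unpr i, n) : Pt m) = (i, (n : WithBot ℤ)) := by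
  rw [projPt_odd _ (unpr_odd i), projIdx_unpr]

lemma projPt_prim (i : Fin m) (n : ℤ) :
    projPt ((prim i, n) : Pt m) = (i, ⊥) := by
  rw [projPt_even _ (prim_even i), projIdx_prim]

lemma projPt_cycSucc_unpr (i : Fin m) (n : ℤ) :
    projPt ((cycSucc (unpr i), n) : Pt m) = (cycSucc i, ⊥) := by
  rw [projPt_even _ (cycSucc_even _ (unpr_odd i)), projIdx_cycSucc _ (unpr_odd i), projIdx_unpr]

lemma unpr_lt_unpr {i j : Fin m} : unpr i < unpr j ↔ i < j := by
  rw [Fin.lt_def, Fin.lt_def]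
  show 2 * i.1 + 1 < 2 * j.1 + 1 ↔ i.1 < j.1
  omega

lemma prim_lt_unpr {i j : Fin m} : prim i < unpr j ↔ i ≤ j := by
  rw [Fin.lt_def, Fin.le_def]
  show 2 * i.1 < 2 * j.1 + 1 ↔ i.1 ≤ j.1
  omega

lemma unpr_lt_prim {i j : Fin m} : unpr i < prim j ↔ i < j := by
  rw [Fin.lt_def, Fin.lt_def]
  show 2 * i.1 + 1 < 2 * j.1 ↔ i.1 < j.1
  omega

lemma unpr_inj {i j : Fin m} (h : unpr i = unpr j) : i = j := by
  have h' : 2 * i.1 + 1 = 2 * j.1 + 1 := congrArg Fin.val h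
  apply Fin.ext
  omega

lemma memA_mk {z0 : ℤ} {r : Fin (2*m)} {n : ℤ} (h : r.1 % 2 = 1 ∨ n ≤ z0) :
    memA z0 ((r, n) : Pt m) := by
  rcases h with h | h
  · exact Or.inl h
  · rcases Nat.mod_two_eq_zero_or_one r.1 with h' | h'
    · exact Or.inr ⟨h', h⟩
    · exact Or.inl h'

lemma odd_of_mono {z0 : ℤ} {p : Fin (2*m)} {x : ℕ → ℤ} (hx : StrictMono x)
    (h : ∀ n, memA z0 ((p, x n) : Pt m)) : p.1 % 2 = 1 := by
  obtain ⟨n, hn⟩ := exists_gt_of_strictMono hx z0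
  rcases h n with h1 | ⟨_, h2⟩
  · exact h1
  · exact absurd h2 (by omega)

lemma projPt_mono (a b : Pt m)
    (h : a.1 < b.1 ∨ (a.1 = b.1 ∧ a.2 ≤ b.2)) :
    (projPt a).1 < (projPt b).1 ∨
      ((projPt a).1 = (projPt b).1 ∧ (projPt a).2 ≤ (projPt b).2) := by
  rcases h with h | ⟨h1, h2⟩
  · have hd : a.1.1 / 2 ≤ b.1.1 / 2 := Nat.div_le_div_right (le_of_lt h)
    rcases lt_or_eq_of_le hd with hd | hd
    · exact Or.inl hd
    · refine Or.inr ⟨Fin.ext hd, ?_⟩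
      have hlt : a.1.1 < b.1.1 := h
      have hev : a.1.1 % 2 = 0 := by omega
      show (projPt a).2 ≤ _
      simp only [projPt]
      rw [if_neg (by omega)]
      exact bot_le
  · refine Or.inr ⟨show projIdx a.1 = projIdx b.1 by rw [h1], ?_⟩
    show (projPt a).2 ≤ (projPt b).2
    simp only [projPt]
    rcases Nat.mod_two_eq_zero_or_one a.1.1 with hp | hp
    · rw [if_neg (by omega), if_neg (by rw [← h1]; omega)]
    · rw [if_pos hp, if_pos (by rw [← h1]; exact hp)]
      exact_mod_cast h2

lemma csort2_projPt (a b : Pt m) :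
    csort2 (projPt a) (projPt b) = (projPt (sort2 a b).1, projPt (sort2 a b).2) := by
  unfold csort2 sort2
  by_cases h : a.1 < b.1 ∨ (a.1 = b.1 ∧ a.2 ≤ b.2)
  · rw [if_pos h, if_pos (projPt_mono a b h)]
  · rw [if_neg h]
    push_neg at h
    have hba : b.1 < a.1 ∨ (b.1 = a.1 ∧ b.2 ≤ a.2) := by
      rcases lt_trichotomy a.1 b.1 with h1 | h1 | h1
      · exact absurd h1 (not_lt.mpr h.1)
      · exact Or.inr ⟨h1.symm, le_of_lt (h.2 h1)⟩
      · exact Or.inl h1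
    have hC := projPt_mono b a hba
    by_cases h2 : (projPt a).1 < (projPt b).1 ∨
        ((projPt a).1 = (projPt b).1 ∧ (projPt a).2 ≤ (projPt b).2)
    · rw [if_pos h2]
      have heq : projPt a = projPt b := by
        rcases h2 with h2 | ⟨h2a, h2b⟩
        · rcases hC with hC | ⟨hCa, _⟩
          · exact absurd (h2.trans hC) (lt_irrefl _)
          · exact absurd h2 (by rw [hCa]; exact lt_irrefl _)
        · rcases hC with hC | ⟨_, hCb⟩
          · exact absurd hC (by rw [h2a]; exact lt_irrefl _)
          · exact Prod.ext h2a (le_antisymm h2b hCb)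
      rw [heq]
    · rw [if_neg h2]

lemma sort2_mem (X : Set (CPt m × CPt m)) (z0 : ℤ) (a b : Pt m)
    (hlab : a.1 ≠ b.1)
    (hin : csort2 (projPt a) (projPt b) ∈ X)
    (ha : memA z0 a) (hb : memA z0 b) :
    sort2 a b ∈ preim X ∩ setA m z0 := by
  have hs := csort2_projPt a b
  refine ⟨⟨?_, Or.inr (hs ▸ hin)⟩, ?_⟩
  · unfold sort2
    split
    · next h =>
        refine ⟨?_, fun hc => absurd hc hlab⟩
        rcases h with h | ⟨h, _⟩
        · exact Or.inl h
        · exact absurd h hlab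
    · next h =>
        push_neg at h
        refine ⟨Or.inl (lt_of_le_of_ne h.1 (Ne.symm hlab)), fun hc => absurd hc.symm hlab⟩
  · unfold sort2
    split
    · exact ⟨ha, hb⟩
    · exact ⟨hb, ha⟩

lemma mem_of (X : Set (CPt m × CPt m)) (z0 : ℤ) (a b : Pt m)
    (hlt : ptLt a b) (hgap : a.1 = b.1 → a.2 + 2 ≤ b.2)
    (hin : (projPt a, projPt b) ∈ X)
    (ha : memA z0 a) (hb : memA z0 b) :
    (a, b) ∈ preim X ∩ setA m z0 :=
  ⟨⟨⟨hlt, hgap⟩, Or.inr hin⟩, ha, hb⟩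

lemma extract {X : Set (CPt m × CPt m)} {z0 : ℤ} {a b : Pt m}
    (h : (a, b) ∈ preim X ∩ setA m z0)
    (hlab : ¬ (a.1 = b.1 ∧ a.1.1 % 2 = 0)) :
    (projPt a, projPt b) ∈ X :=
  h.1.2.resolve_left hlab

lemma sort2_extract {X : Set (CPt m × CPt m)} {z0 : ℤ} {a b : Pt m}
    (hlab : a.1 ≠ b.1)
    (h : sort2 a b ∈ preim X ∩ setA m z0) :
    csort2 (projPt a) (projPt b) ∈ X := by
  rw [csort2_projPt]
  rcases h.1.2 with hc | hc
  · exfalso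
    unfold sort2 at hc
    split at hc
    · exact hlab hc.1
    · exact hlab hc.1.symm
  · exact hc

lemma ne_of_odd_even {r s : Fin (2*m)} (hr : r.1 % 2 = 1) (hs : s.1 % 2 = 0) : r ≠ s := by
  intro hc
  rw [hc] at hr
  omega

lemma unpr_ne_even {i : Fin m} {r : Fin (2*m)} (h : r.1 % 2 = 0) : unpr i ≠ r :=
  ne_of_odd_even (unpr_odd i) h

lemma cptLt_cases {i j : Fin m} {u v : WithBot ℤ} (h : cptLt ((i, u) : CPt m) (j, v)) :
    i < j ∨ (i = j ∧ u < v) := h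

end PY

/-!
STATEMENT 12: Let X be a set of arcs of the completed ∞-gon ōZ_m. Then X satisfies the
completed PC conditions if and only if the set π⁻¹X ∩ A of arcs of Z_{2m} satisfies the
PC conditions.
-/

open PY in
theorem completedPC_iff_preimage_inter_A_PC
    (m : ℕ) (hm : 0 < m) (z0 : ℤ)
    (X : Set (CPt m × CPt m)) (hX : ∀ a ∈ X, IsCArc a) :
    CPCcond X ↔ PCcond (preim X ∩ setA m z0) := by
  constructor
  · -- forward direction
    intro h
    refine { pc1 := ?_, pc2 := ?_, pc2' := ?_, pc3 := ?_, pc3' := ?_ }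
    · -- PC1
      intro p q hpq x1 x2 h1 h2 hmem
      have hp : p.1 % 2 = 1 := odd_of_mono h1 (fun n => (hmem n).2.1)
      have hq : q.1 % 2 = 1 := odd_of_mono h2 (fun n => (hmem n).2.2)
      have hpi : projIdx p ≠ projIdx q := fun he => hpq (projIdx_inj (by omega) he)
      have hXm : ∀ n, (((projIdx p, (x1 n : WithBot ℤ)) : CPt m),
          ((projIdx q, (x2 n : WithBot ℤ)) : CPt m)) ∈ X := by
        intro n
        have h' := extract (hmem n) (fun hc => by
          have h2' : p.1 % 2 = 0 := hc.2; omega)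
        rwa [projPt_odd p hp, projPt_odd q hq] at h'
      have key := h.pc1 _ _ hpi x1 x2 h1 h2 hXm
      refine ⟨fun n => z0 - n, fun n => z0 - n, strictAnti_sub z0, strictAnti_sub z0,
        fun n => ?_⟩
      refine sort2_mem X z0 _ _ (fun hc => hpq (cycSucc_inj hc)) ?_
        (memA_mk (Or.inr (zle z0 n))) (memA_mk (Or.inr (zle z0 n)))
      rw [projPt_even _ (cycSucc_even p hp), projPt_even _ (cycSucc_even q hq),
        projIdx_cycSucc p hp, projIdx_cycSucc q hq]
      exact key
    · -- PC2
      intro p q hpq x1 x2 h1 h2 hmem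
      have hq : q.1 % 2 = 1 := odd_of_mono h2 (fun n => (hmem n).2.2)
      rcases Nat.mod_two_eq_zero_or_one p.1 with hp | hp
      · -- p even
        have hXm : ∀ n, (((projIdx p, (⊥ : WithBot ℤ)) : CPt m),
            ((projIdx q, (x2 n : WithBot ℤ)) : CPt m)) ∈ X := by
          intro n
          have h' := extract (hmem n) (fun hc => by
            have h2' : p = q := hc.1
            rw [h2'] at hp; omega)
          rwa [projPt_even p hp, projPt_odd q hq] at h'
        have hside : ((projIdx p, (⊥ : WithBot ℤ)) : CPt m) ≠ (cycSucc (projIdx q), ⊥) := by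
          intro hc
          apply hpq
          have h1' : projIdx p = cycSucc (projIdx q) := congrArg Prod.fst hc
          rw [← projIdx_cycSucc q hq] at h1'
          exact projIdx_inj (by rw [hp, cycSucc_even q hq]) h1'
        have key := h.pc3 _ _ hside x2 h2 hXm
        refine ⟨fun n => z0 - n, fun n => z0 - n, strictAnti_sub z0, strictAnti_sub z0,
          fun n => ?_⟩
        refine sort2_mem X z0 _ _ hpq ?_ (memA_mk (Or.inr (zle z0 n)))
          (memA_mk (Or.inr (zle z0 n)))
        rw [projPt_even p hp, projPt_even _ (cycSucc_even q hq), projIdx_cycSucc q hq]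
        exact key
      · -- p odd
        have hXm : ∀ n, (((projIdx p, (x1 n : WithBot ℤ)) : CPt m),
            ((projIdx q, (x2 n : WithBot ℤ)) : CPt m)) ∈ X := by
          intro n
          have h' := extract (hmem n) (fun hc => by
            have h2' : p.1 % 2 = 0 := hc.2; omega)
          rwa [projPt_odd p hp, projPt_odd q hq] at h'
        obtain ⟨y1, hy1, hkey⟩ := h.pc2 (projIdx p) (projIdx q) x1 x2 h1 h2 hXm
        refine ⟨y1, fun n => z0 - n, hy1, strictAnti_sub z0, fun n => ?_⟩
        refine sort2_mem X z0 _ _ (ne_of_odd_even hp (cycSucc_even q hq)) ?_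
          (memA_mk (Or.inl hp)) (memA_mk (Or.inr (zle z0 n)))
        rw [projPt_odd p hp, projPt_even _ (cycSucc_even q hq), projIdx_cycSucc q hq]
        exact hkey n
    · -- PC2'
      intro p q hqp hpq x1 x2 h1 h2 hmem
      have hp : p.1 % 2 = 1 := odd_of_mono h1 (fun n => (hmem n).2.1)
      rcases Nat.mod_two_eq_zero_or_one q.1 with hq | hq
      · -- q even
        have hXm : ∀ n, (((projIdx p, (x1 n : WithBot ℤ)) : CPt m),
            ((projIdx q, (⊥ : WithBot ℤ)) : CPt m)) ∈ X := by
          intro n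
          have h' := extract (hmem n) (fun hc => by
            have h2' : p.1 % 2 = 0 := hc.2; omega)
          rwa [projPt_odd p hp, projPt_even q hq] at h'
        have hc1 : ¬ (((projIdx q, (⊥ : WithBot ℤ)) : CPt m).1 = projIdx p ∧
            ((projIdx q, (⊥ : WithBot ℤ)) : CPt m).2 ≠ ⊥) := fun hc => hc.2 rfl
        have hc2 : ((projIdx q, (⊥ : WithBot ℤ)) : CPt m) ≠ (cycSucc (projIdx p), ⊥) := by
          intro hc
          apply hqp
          have h1' : projIdx q = cycSucc (projIdx p) := congrArg Prod.fst hc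
          rw [← projIdx_cycSucc p hp] at h1'
          exact projIdx_inj (by rw [hq, cycSucc_even p hp]) h1'
        have key := h.pc3' (projIdx p) _ hc1 hc2 x1 h1 hXm
        refine ⟨fun n => z0 - n, fun n => z0 - n, strictAnti_sub z0, strictAnti_sub z0,
          fun n => ?_⟩
        refine sort2_mem X z0 _ _ (fun hc => hqp hc.symm) ?_
          (memA_mk (Or.inr (zle z0 n))) (memA_mk (Or.inr (zle z0 n)))
        rw [projPt_even _ (cycSucc_even p hp), projIdx_cycSucc p hp, projPt_even q hq]
        exact key
      · -- q odd
        have hqi : projIdx p ≠ projIdx q := fun he => hpq (projIdx_inj (by omega) he)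
        have hXm : ∀ n, (((projIdx p, (x1 n : WithBot ℤ)) : CPt m),
            ((projIdx q, (x2 n : WithBot ℤ)) : CPt m)) ∈ X := by
          intro n
          have h' := extract (hmem n) (fun hc => by
            have h2' : p.1 % 2 = 0 := hc.2; omega)
          rwa [projPt_odd p hp, projPt_odd q hq] at h'
        obtain ⟨y2, hy2, hkey⟩ := h.pc2' (projIdx p) (projIdx q) hqi x1 x2 h1 h2 hXm
        refine ⟨fun n => z0 - n, y2, strictAnti_sub z0, hy2, fun n => ?_⟩
        refine sort2_mem X z0 _ _
          (Ne.symm (ne_of_odd_even hq (cycSucc_even p hp))) ?_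
          (memA_mk (Or.inr (zle z0 n))) (memA_mk (Or.inl hq))
        rw [projPt_even _ (cycSucc_even p hp), projIdx_cycSucc p hp, projPt_odd q hq]
        exact hkey n
    · -- PC3
      intro p q x1 x2 h2 hmem
      have hq : q.1 % 2 = 1 := odd_of_mono h2 (fun n => (hmem n).2.2)
      have hA1 : memA z0 ((p, x1) : Pt m) := (hmem 0).2.1
      rcases Nat.mod_two_eq_zero_or_one p.1 with hp | hp
      · by_cases hpc : p = cycSucc q
        · -- special: p = cycSucc q, same even copy target
          have hx1 : x1 ≤ z0 := by
            rcases hA1 with h' | h'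
            · exact absurd (show p.1 % 2 = 1 from h') (by omega)
            · exact h'.2
          refine ⟨fun n => (x1 - 2) - n, strictAnti_sub (x1 - 2), fun n => ?_⟩
          show sort2 ((p, x1) : Pt m) (cycSucc q, x1 - 2 - (n : ℤ)) ∈ preim X ∩ setA m z0
          rw [← hpc]
          have hn : (0 : ℤ) ≤ (n : ℤ) := Int.natCast_nonneg n
          have hs : sort2 ((p, x1) : Pt m) (p, x1 - 2 - (n : ℤ)) =
              ((p, x1 - 2 - (n : ℤ)), (p, x1)) := by
            unfold sort2
            rw [if_neg]
            rintro (hc | ⟨-, hc⟩)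
            · exact lt_irrefl _ hc
            · omega
          rw [hs]
          refine ⟨⟨⟨Or.inr ⟨rfl, show x1 - 2 - (n : ℤ) < x1 by omega⟩,
            fun _ => show x1 - 2 - (n : ℤ) + 2 ≤ x1 by omega⟩, Or.inl ⟨rfl, hp⟩⟩,
            memA_mk (Or.inr (by omega)), memA_mk (Or.inr hx1)⟩
        · -- p even, p ≠ cycSucc q
          have hXm : ∀ n, (((projIdx p, (⊥ : WithBot ℤ)) : CPt m),
              ((projIdx q, (x2 n : WithBot ℤ)) : CPt m)) ∈ X := by
            intro n
            have h' := extract (hmem n) (fun hc => by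
              have h2' : p = q := hc.1
              rw [h2'] at hp; omega)
            rwa [projPt_even p hp, projPt_odd q hq] at h'
          have hside : ((projIdx p, (⊥ : WithBot ℤ)) : CPt m) ≠ (cycSucc (projIdx q), ⊥) := by
            intro hc
            apply hpc
            have h1' : projIdx p = cycSucc (projIdx q) := congrArg Prod.fst hc
            rw [← projIdx_cycSucc q hq] at h1'
            exact projIdx_inj (by rw [hp, cycSucc_even q hq]) h1'
          have key := h.pc3 _ _ hside x2 h2 hXm
          refine ⟨fun n => z0 - n, strictAnti_sub z0, fun n => ?_⟩
          refine sort2_mem X z0 _ _ hpc ?_ hA1 (memA_mk (Or.inr (zle z0 n)))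
          rw [projPt_even p hp, projPt_even _ (cycSucc_even q hq), projIdx_cycSucc q hq]
          exact key
      · -- p odd
        have hXm : ∀ n, (((projIdx p, (x1 : WithBot ℤ)) : CPt m),
            ((projIdx q, (x2 n : WithBot ℤ)) : CPt m)) ∈ X := by
          intro n
          have h' := extract (hmem n) (fun hc => by
            have h2' : p.1 % 2 = 0 := hc.2; omega)
          rwa [projPt_odd p hp, projPt_odd q hq] at h'
        have hside : ((projIdx p, (x1 : WithBot ℤ)) : CPt m) ≠ (cycSucc (projIdx q), ⊥) :=
          fun hc => WithBot.coe_ne_bot (congrArg Prod.snd hc)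
        have key := h.pc3 _ _ hside x2 h2 hXm
        refine ⟨fun n => z0 - n, strictAnti_sub z0, fun n => ?_⟩
        refine sort2_mem X z0 _ _ (ne_of_odd_even hp (cycSucc_even q hq)) ?_ hA1
          (memA_mk (Or.inr (zle z0 n)))
        rw [projPt_odd p hp, projPt_even _ (cycSucc_even q hq), projIdx_cycSucc q hq]
        exact key
    · -- PC3'
      intro p q hpq x1 x2 h1 hmem
      have hp : p.1 % 2 = 1 := odd_of_mono h1 (fun n => (hmem n).2.1)
      have hA2 : memA z0 ((q, x2) : Pt m) := (hmem 0).2.2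
      rcases Nat.mod_two_eq_zero_or_one q.1 with hq | hq
      · by_cases hqc : q = cycSucc p
        · -- special: q = cycSucc p, same even copy target
          have hx2 : x2 ≤ z0 := by
            rcases hA2 with h' | h'
            · exact absurd (show q.1 % 2 = 1 from h') (by omega)
            · exact h'.2
          refine ⟨fun n => (x2 - 2) - n, strictAnti_sub (x2 - 2), fun n => ?_⟩
          show sort2 ((cycSucc p, x2 - 2 - (n : ℤ)) : Pt m) (q, x2) ∈ preim X ∩ setA m z0
          rw [← hqc]
          have hn : (0 : ℤ) ≤ (n : ℤ) := Int.natCast_nonneg n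
          have hs : sort2 ((q, x2 - 2 - (n : ℤ)) : Pt m) (q, x2) =
              ((q, x2 - 2 - (n : ℤ)), (q, x2)) := by
            unfold sort2
            rw [if_pos (Or.inr ⟨rfl, by omega⟩)]
          rw [hs]
          refine ⟨⟨⟨Or.inr ⟨rfl, show x2 - 2 - (n : ℤ) < x2 by omega⟩,
            fun _ => show x2 - 2 - (n : ℤ) + 2 ≤ x2 by omega⟩, Or.inl ⟨rfl, hq⟩⟩,
            memA_mk (Or.inr (by omega)), memA_mk (Or.inr hx2)⟩
        · -- q even, q ≠ cycSucc p
          have hXm : ∀ n, (((projIdx p, (x1 n : WithBot ℤ)) : CPt m),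
              ((projIdx q, (⊥ : WithBot ℤ)) : CPt m)) ∈ X := by
            intro n
            have h' := extract (hmem n) (fun hc => by
              have h2' : p.1 % 2 = 0 := hc.2; omega)
            rwa [projPt_odd p hp, projPt_even q hq] at h'
          have hc1 : ¬ (((projIdx q, (⊥ : WithBot ℤ)) : CPt m).1 = projIdx p ∧
              ((projIdx q, (⊥ : WithBot ℤ)) : CPt m).2 ≠ ⊥) := fun hc => hc.2 rfl
          have hc2 : ((projIdx q, (⊥ : WithBot ℤ)) : CPt m) ≠ (cycSucc (projIdx p), ⊥) := by
            intro hc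
            apply hqc
            have h1' : projIdx q = cycSucc (projIdx p) := congrArg Prod.fst hc
            rw [← projIdx_cycSucc p hp] at h1'
            exact projIdx_inj (by rw [hq, cycSucc_even p hp]) h1'
          have key := h.pc3' (projIdx p) _ hc1 hc2 x1 h1 hXm
          refine ⟨fun n => z0 - n, strictAnti_sub z0, fun n => ?_⟩
          refine sort2_mem X z0 _ _ (fun hc => hqc hc.symm) ?_
            (memA_mk (Or.inr (zle z0 n))) hA2
          rw [projPt_even _ (cycSucc_even p hp), projIdx_cycSucc p hp, projPt_even q hq]
          exact key
      · -- q odd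
        have hqi : projIdx p ≠ projIdx q := fun he => hpq (projIdx_inj (by omega) he)
        have hXm : ∀ n, (((projIdx p, (x1 n : WithBot ℤ)) : CPt m),
            ((projIdx q, (x2 : WithBot ℤ)) : CPt m)) ∈ X := by
          intro n
          have h' := extract (hmem n) (fun hc => by
            have h2' : p.1 % 2 = 0 := hc.2; omega)
          rwa [projPt_odd p hp, projPt_odd q hq] at h'
        have hc1 : ¬ (((projIdx q, (x2 : WithBot ℤ)) : CPt m).1 = projIdx p ∧
            ((projIdx q, (x2 : WithBot ℤ)) : CPt m).2 ≠ ⊥) := fun hc => hqi hc.1.symm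
        have hc2 : ((projIdx q, (x2 : WithBot ℤ)) : CPt m) ≠ (cycSucc (projIdx p), ⊥) :=
          fun hc => WithBot.coe_ne_bot (congrArg Prod.snd hc)
        have key := h.pc3' (projIdx p) _ hc1 hc2 x1 h1 hXm
        refine ⟨fun n => z0 - n, strictAnti_sub z0, fun n => ?_⟩
        refine sort2_mem X z0 _ _
          (Ne.symm (ne_of_odd_even hq (cycSucc_even p hp))) ?_
          (memA_mk (Or.inr (zle z0 n))) hA2
        rw [projPt_even _ (cycSucc_even p hp), projIdx_cycSucc p hp, projPt_odd q hq]
        exact key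
  · -- backward direction
    intro hU
    refine { pc1 := ?_, pc2 := ?_, pc2' := ?_, pc3 := ?_, pc3' := ?_ }
    · -- ōPC1
      intro p q hpq x1 x2 h1 h2 hmem
      have hlt : p < q := by
        rcases cptLt_cases (hX _ (hmem 0)).1 with h' | ⟨h', -⟩
        · exact h'
        · exact absurd h' hpq
      have hUm : ∀ n, (((unpr p, x1 n) : Pt m), (unpr q, x2 n)) ∈ preim X ∩ setA m z0 := by
        intro n
        refine mem_of X z0 _ _ (Or.inl (unpr_lt_unpr.mpr hlt))
          (fun hc => absurd (unpr_inj hc) hpq) ?_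
          (memA_mk (Or.inl (unpr_odd p))) (memA_mk (Or.inl (unpr_odd q)))
        rw [projPt_unpr, projPt_unpr]
        exact hmem n
      obtain ⟨y1, y2, hy1, hy2, hs⟩ := hU.pc1 (unpr p) (unpr q)
        (fun hc => hpq (unpr_inj hc)) x1 x2 h1 h2 hUm
      have h' := sort2_extract (a := ((cycSucc (unpr p), y1 0) : Pt m))
        (b := (cycSucc (unpr q), y2 0))
        (fun hc => hpq (unpr_inj (cycSucc_inj hc))) (hs 0)
      rwa [projPt_cycSucc_unpr, projPt_cycSucc_unpr] at h'
    · -- ōPC2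
      intro p q x1 x2 h1 h2 hmem
      have hUm : ∀ n, (((unpr p, x1 n) : Pt m), (unpr q, x2 n)) ∈ preim X ∩ setA m z0 := by
        intro n
        have hc := hX _ (hmem n)
        refine mem_of X z0 _ _ ?_ ?_ ?_
          (memA_mk (Or.inl (unpr_odd p))) (memA_mk (Or.inl (unpr_odd q)))
        · rcases cptLt_cases hc.1 with h' | ⟨h', h''⟩
          · exact Or.inl (unpr_lt_unpr.mpr h')
          · exact Or.inr ⟨congrArg unpr h', WithBot.coe_lt_coe.mp h''⟩
        · intro hc'
          exact hc.2 (x1 n) (x2 n) rfl rfl (unpr_inj hc')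
        · rw [projPt_unpr, projPt_unpr]
          exact hmem n
      obtain ⟨y1, y2, hy1, hy2, hs⟩ := hU.pc2 (unpr p) (unpr q)
        (unpr_ne_even (cycSucc_even _ (unpr_odd q))) x1 x2 h1 h2 hUm
      refine ⟨y1, hy1, fun n => ?_⟩
      have h' := sort2_extract (a := ((unpr p, y1 n) : Pt m))
        (b := (cycSucc (unpr q), y2 n))
        (unpr_ne_even (cycSucc_even _ (unpr_odd q))) (hs n)
      rwa [projPt_unpr, projPt_cycSucc_unpr] at h'
    · -- ōPC2'
      intro p q hpq x1 x2 h1 h2 hmem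
      have hlt : p < q := by
        rcases cptLt_cases (hX _ (hmem 0)).1 with h' | ⟨h', -⟩
        · exact h'
        · exact absurd h' hpq
      have hUm : ∀ n, (((unpr p, x1 n) : Pt m), (unpr q, x2 n)) ∈ preim X ∩ setA m z0 := by
        intro n
        refine mem_of X z0 _ _ (Or.inl (unpr_lt_unpr.mpr hlt))
          (fun hc => absurd (unpr_inj hc) hpq) ?_
          (memA_mk (Or.inl (unpr_odd p))) (memA_mk (Or.inl (unpr_odd q)))
        rw [projPt_unpr, projPt_unpr]
        exact hmem n
      obtain ⟨y1, y2, hy1, hy2, hs⟩ := hU.pc2' (unpr p) (unpr q)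
        (unpr_ne_even (cycSucc_even _ (unpr_odd p)))
        (fun hc => hpq (unpr_inj hc)) x1 x2 h1 h2 hUm
      refine ⟨y2, hy2, fun n => ?_⟩
      have h' := sort2_extract (a := ((cycSucc (unpr p), y1 n) : Pt m))
        (b := (unpr q, y2 n))
        (Ne.symm (unpr_ne_even (cycSucc_even _ (unpr_odd p)))) (hs n)
      rwa [projPt_cycSucc_unpr, projPt_unpr] at h'
    · -- ōPC3
      intro x1 q hne x2 h2 hmem
      obtain ⟨a, v⟩ := x1
      rcases v with _ | v
      · -- v = ⊥
        have hne' : a ≠ cycSucc q := fun hc => hne (by rw [hc]; rfl)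
        have hle : a ≤ q := by
          rcases cptLt_cases (hX _ (hmem 0)).1 with h' | ⟨h', -⟩
          · exact le_of_lt h'
          · exact le_of_eq h'
        have hUm : ∀ n, (((prim a, z0) : Pt m), (unpr q, x2 n)) ∈ preim X ∩ setA m z0 := by
          intro n
          refine mem_of X z0 _ _ (Or.inl (prim_lt_unpr.mpr hle))
            (fun hc => absurd hc.symm (unpr_ne_even (prim_even a))) ?_
            (memA_mk (Or.inr le_rfl)) (memA_mk (Or.inl (unpr_odd q)))
          rw [projPt_prim, projPt_unpr]
          exact hmem n
        obtain ⟨y2, hy2, hs⟩ := hU.pc3 (prim a) (unpr q) z0 x2 h2 hUm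
        have hlab : prim a ≠ cycSucc (unpr q) := by
          intro hc
          apply hne'
          have h'' := congrArg projIdx hc
          rwa [projIdx_prim, projIdx_cycSucc _ (unpr_odd q), projIdx_unpr] at h''
        have h' := sort2_extract (a := ((prim a, z0) : Pt m))
          (b := (cycSucc (unpr q), y2 0)) hlab (hs 0)
        rwa [projPt_prim, projPt_cycSucc_unpr] at h'
      · -- v = coe
        have hUm : ∀ n, (((unpr a, v) : Pt m), (unpr q, x2 n)) ∈ preim X ∩ setA m z0 := by
          intro n
          have hc := hX _ (hmem n)
          refine mem_of X z0 _ _ ?_ ?_ ?_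
            (memA_mk (Or.inl (unpr_odd a))) (memA_mk (Or.inl (unpr_odd q)))
          · rcases cptLt_cases hc.1 with h' | ⟨h', h''⟩
            · exact Or.inl (unpr_lt_unpr.mpr h')
            · exact Or.inr ⟨congrArg unpr h', WithBot.coe_lt_coe.mp h''⟩
          · intro hc'
            exact hc.2 v (x2 n) rfl rfl (unpr_inj hc')
          · rw [projPt_unpr, projPt_unpr]
            exact hmem n
        obtain ⟨y2, hy2, hs⟩ := hU.pc3 (unpr a) (unpr q) v x2 h2 hUm
        have h' := sort2_extract (a := ((unpr a, v) : Pt m))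
          (b := (cycSucc (unpr q), y2 0))
          (unpr_ne_even (cycSucc_even _ (unpr_odd q))) (hs 0)
        rwa [projPt_unpr, projPt_cycSucc_unpr] at h'
    · -- ōPC3'
      intro p x2 hc1 hc2 x1 h1 hmem
      obtain ⟨b, w⟩ := x2
      rcases w with _ | w
      · -- w = ⊥
        have hb : b ≠ cycSucc p := fun hc => hc2 (by rw [hc]; rfl)
        have hlt : p < b := by
          rcases cptLt_cases (hX _ (hmem 0)).1 with h' | ⟨-, h''⟩
          · exact h'
          · exact absurd h'' not_lt_bot
        have hUm : ∀ n, (((unpr p, x1 n) : Pt m), (prim b, z0)) ∈ preim X ∩ setA m z0 := by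
          intro n
          refine mem_of X z0 _ _ (Or.inl (unpr_lt_prim.mpr hlt))
            (fun hc => absurd hc (unpr_ne_even (prim_even b))) ?_
            (memA_mk (Or.inl (unpr_odd p))) (memA_mk (Or.inr le_rfl))
          rw [projPt_unpr, projPt_prim]
          exact hmem n
        obtain ⟨y1, hy1, hs⟩ := hU.pc3' (unpr p) (prim b)
          (unpr_ne_even (prim_even b)) x1 z0 h1 hUm
        have hlab : cycSucc (unpr p) ≠ prim b := by
          intro hc
          have h'' := congrArg projIdx hc
          rw [projIdx_cycSucc _ (unpr_odd p), projIdx_unpr, projIdx_prim] at h''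
          exact hb h''.symm
        have h' := sort2_extract (a := ((cycSucc (unpr p), y1 0) : Pt m))
          (b := (prim b, z0)) hlab (hs 0)
        rwa [projPt_cycSucc_unpr, projPt_prim] at h'
      · -- w = coe
        have hbp : b ≠ p := fun hc => hc1 ⟨hc, WithBot.coe_ne_bot⟩
        have hlt : p < b := by
          rcases cptLt_cases (hX _ (hmem 0)).1 with h' | ⟨h', -⟩
          · exact h'
          · exact absurd h'.symm hbp
        have hUm : ∀ n, (((unpr p, x1 n) : Pt m), (unpr b, w)) ∈ preim X ∩ setA m z0 := by
          intro n
          refine mem_of X z0 _ _ (Or.inl (unpr_lt_unpr.mpr hlt))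
            (fun hc => absurd (unpr_inj hc).symm hbp) ?_
            (memA_mk (Or.inl (unpr_odd p))) (memA_mk (Or.inl (unpr_odd b)))
          rw [projPt_unpr, projPt_unpr]
          exact hmem n
        obtain ⟨y1, hy1, hs⟩ := hU.pc3' (unpr p) (unpr b)
          (fun hc => hbp (unpr_inj hc).symm) x1 w h1 hUm
        have h' := sort2_extract (a := ((cycSucc (unpr p), y1 0) : Pt m))
          (b := (unpr b, w))
          (Ne.symm (unpr_ne_even (cycSucc_even _ (unpr_odd p)))) (hs 0)
        rwa [projPt_cycSucc_unpr, projPt_unpr] at h'
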